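/- Let Φ be an n×m real matrix, L an n×n symmetric positive semidefinite matrix, H = I − (1/n)·𝟙𝟙ᵀ the centering matrix, and δ > 0. Then I + δ·Φᵀ·H·L·H·Φ is positive definite (hence invertible), and Φ·(I + δ·Φᵀ·H·L·H·Φ)⁻¹·Φᵀ = (K⁻¹ + δ·H·L·H)⁻¹ whenever K = Φ·Φᵀ is invertible. -/

import Mathlib

open Matrix

lemma psd_smul {k : ℕ} {A : Matrix (Fin k) (Fin k) ℝ}
    (hA : A.PosSemidef) {c : ℝ} (hc : 0 ≤ c) : (c • A).PosSemidef :=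
  ⟨by rw [Matrix.IsHermitian, Matrix.conjTranspose_smul, star_trivial, hA.1.eq],
   fun x => by
    exact (hA.smul hc).2 x⟩

lemma psd_isUnit_posDef {k : ℕ} {A : Matrix (Fin k) (Fin k) ℝ}
    (hA : A.PosSemidef) (h : IsUnit A.det) : A.PosDef := by
  rw [Matrix.posDef_iff_dotProduct_mulVec]
  refine ⟨hA.1, fun x hx => ((Matrix.posSemidef_iff_dotProduct_mulVec.mp hA).2 x).lt_of_ne fun h0 => hx ?_⟩
  have hz : A *ᵥ x = 0 := (hA.dotProduct_mulVec_zero_iff x).mp h0.symm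
  have hinj : Function.Injective A.mulVec :=
    Matrix.mulVec_injective_iff_isUnit.mpr ((Matrix.isUnit_iff_isUnit_det A).mpr h)
  have := hinj (a₁ := x) (a₂ := 0) (by simpa using hz)
  simpa using this

theorem stmt_1 {n m : ℕ} (Φ : Matrix (Fin n) (Fin m) ℝ)
    (L : Matrix (Fin n) (Fin n) ℝ) (hL : L.PosSemidef)
    (H : Matrix (Fin n) (Fin n) ℝ)
    (hH : H = 1 - ((n : ℝ)⁻¹) • Matrix.of (fun _ _ => (1 : ℝ)))
    (δ : ℝ) (hδ : 0 < δ) :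
    ((1 : Matrix (Fin m) (Fin m) ℝ) + δ • (Φᵀ * H * L * H * Φ)).PosDef ∧
      (IsUnit (Φ * Φᵀ).det →
        Φ * ((1 : Matrix (Fin m) (Fin m) ℝ) + δ • (Φᵀ * H * L * H * Φ))⁻¹ * Φᵀ =
          ((Φ * Φᵀ)⁻¹ + δ • (H * L * H))⁻¹) := by
  have hHsymm : Hᵀ = H := by
    subst hH
    ext i j
    simp [Matrix.transpose_apply, Matrix.one_apply, eq_comm]
  have hHconj : Hᴴ = H := by
    rw [show Hᴴ = Hᵀ from by ext i j; simp [Matrix.conjTranspose_apply], hHsymm]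
  have hΦconj : Φᴴ = Φᵀ := by ext i j; simp [Matrix.conjTranspose_apply]
  -- inner PSD matrix
  have hinner : (Φᵀ * H * L * H * Φ).PosSemidef := by
    have := hL.conjTranspose_mul_mul_same (H * Φ)
    have e : (H * Φ)ᴴ * L * (H * Φ) = Φᵀ * H * L * H * Φ := by
      rw [Matrix.conjTranspose_mul, hHconj, hΦconj]
      simp only [Matrix.mul_assoc]
    rwa [e] at this
  have hS : (H * L * H).PosSemidef := by
    have := hL.mul_mul_conjTranspose_same H
    rwa [hHconj] at this
  set A := (1 : Matrix (Fin m) (Fin m) ℝ) + δ • (Φᵀ * H * L * H * Φ) with hA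
  have hApd : A.PosDef := by
    refine Matrix.PosDef.add_posSemidef ?_ (psd_smul hinner hδ.le)
    exact Matrix.PosDef.one
  refine ⟨hApd, fun hK => ?_⟩
  set K := Φ * Φᵀ with hKdef
  have hKpsd : K.PosSemidef := by
    have := Matrix.posSemidef_self_mul_conjTranspose Φ
    rwa [hΦconj] at this
  have hKpd : K.PosDef := psd_isUnit_posDef hKpsd hK
  set M := K⁻¹ + δ • (H * L * H) with hM
  have hMpd : M.PosDef := Matrix.PosDef.add_posSemidef hKpd.inv (psd_smul hS hδ.le)
  have hAdet : IsUnit A.det := (Matrix.isUnit_iff_isUnit_det A).mp hApd.isUnit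
  have hKK : K * K⁻¹ = 1 := Matrix.mul_nonsing_inv K hK
  have hKKl : K⁻¹ * K = 1 := Matrix.nonsing_inv_mul K hK
  have hAA : A * A⁻¹ = 1 := Matrix.mul_nonsing_inv A hAdet
  -- key identity: K * M * Φ = Φ * A
  have key : K * M * Φ = Φ * A := by
    rw [hM, hA]
    rw [Matrix.mul_add, hKK, Matrix.add_mul, Matrix.mul_add, Matrix.one_mul,
      Matrix.mul_one]
    simp only [Matrix.mul_smul, Matrix.smul_mul, hKdef, Matrix.mul_assoc]
  have hMΦ : M * Φ = K⁻¹ * (Φ * A) := by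
    calc M * Φ = K⁻¹ * (K * M * Φ) := by
          rw [Matrix.mul_assoc K M Φ, ← Matrix.mul_assoc K⁻¹ K (M * Φ), hKKl, Matrix.one_mul]
      _ = K⁻¹ * (Φ * A) := by rw [key]
  symm
  apply Matrix.inv_eq_right_inv
  calc M * (Φ * A⁻¹ * Φᵀ)
      = (M * Φ) * A⁻¹ * Φᵀ := by simp only [Matrix.mul_assoc]
    _ = K⁻¹ * (Φ * A) * A⁻¹ * Φᵀ := by rw [hMΦ]
    _ = K⁻¹ * Φ * (A * A⁻¹) * Φᵀ := by simp only [Matrix.mul_assoc]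
    _ = K⁻¹ * (Φ * Φᵀ) := by rw [hAA]; simp only [Matrix.mul_one, Matrix.mul_assoc]
    _ = 1 := by rw [← hKdef, hKKl]
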